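/- (Theorem, vector form) Let n, m be positive natural numbers, Δt ∈ ℝ, and for each i = 1, ..., m let G_i : ℝ^n → ℝ^n (the right-hand side G(i·Δt, ·) at time step i) and N_i : ℝ^n → ℝ^n (the i-th implicit Euler step). Let x₀, x₁, ..., x_m ∈ ℝ^n satisfy N_i(x_{i-1}) = x_i, suppose G_i is differentiable at x_i and N_i is differentiable at x_{i-1}, that for all y in some neighborhood of x_{i-1} the residual identity N_i(y) - y - Δt · G_i(N_i(y)) = 0 holds, and that the continuous linear map A_i = id - Δt • (fderiv G_i x_i) is invertible with inverse given by a continuous linear equivalence e_i. Then for every v ∈ ℝ^n, the vector w = A_1(A_2(...(A_m(v))...)) obtained by m successive matrix-vector products with the residual Jacobians A_m, A_{m-1}, ..., A_1 satisfies (fderiv (N_m ∘ ... ∘ N_1) x₀)(w) = v; that is, w is the differential inverse (E')⁻¹ · v of the implicit Euler method applied to v. -/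

import Mathlib

theorem step_deriv (n m : ℕ)
    (Δt : ℝ)
    (G N : Fin m → (EuclideanSpace ℝ (Fin n) → EuclideanSpace ℝ (Fin n)))
    (x : Fin (m + 1) → EuclideanSpace ℝ (Fin n))
    (e : Fin m → (EuclideanSpace ℝ (Fin n) ≃L[ℝ] EuclideanSpace ℝ (Fin n)))
    (hstep : ∀ i : Fin m, N i (x i.castSucc) = x i.succ)
    (hG : ∀ i : Fin m, DifferentiableAt ℝ (G i) (x i.succ))
    (hN : ∀ i : Fin m, DifferentiableAt ℝ (N i) (x i.castSucc))
    (hres : ∀ i : Fin m, ∀ᶠ y in nhds (x i.castSucc),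
      N i y - y - Δt • G i (N i y) = 0)
    (he : ∀ i : Fin m,
      (e i : EuclideanSpace ℝ (Fin n) →L[ℝ] EuclideanSpace ℝ (Fin n)) =
        ContinuousLinearMap.id ℝ (EuclideanSpace ℝ (Fin n)) -
          Δt • fderiv ℝ (G i) (x i.succ)) (i : Fin m) :
    HasFDerivAt (N i)
      ((e i).symm : EuclideanSpace ℝ (Fin n) →L[ℝ] EuclideanSpace ℝ (Fin n))
      (x i.castSucc) := by
  have hNf : HasFDerivAt (N i) (fderiv ℝ (N i) (x i.castSucc)) (x i.castSucc) :=
    (hN i).hasFDerivAt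
  have hG' : HasFDerivAt (G i) (fderiv ℝ (G i) (x i.succ)) (x i.succ) := (hG i).hasFDerivAt
  have hGc : HasFDerivAt (fun y => G i (N i y))
      ((fderiv ℝ (G i) (x i.succ)).comp (fderiv ℝ (N i) (x i.castSucc))) (x i.castSucc) := by
    refine HasFDerivAt.comp _ ?_ hNf
    rw [hstep i]; exact hG'
  have hgg : HasFDerivAt (fun y => y + Δt • G i (N i y))
      (ContinuousLinearMap.id ℝ (EuclideanSpace ℝ (Fin n)) +
        Δt • (fderiv ℝ (G i) (x i.succ)).comp (fderiv ℝ (N i) (x i.castSucc)))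
      (x i.castSucc) := (hasFDerivAt_id _).add (hGc.const_smul Δt)
  have heq : N i =ᶠ[nhds (x i.castSucc)] (fun y => y + Δt • G i (N i y)) := by
    filter_upwards [hres i] with y hy
    exact sub_eq_zero.mp (by rwa [sub_sub] at hy)
  have hDeq : fderiv ℝ (N i) (x i.castSucc) =
      ContinuousLinearMap.id ℝ (EuclideanSpace ℝ (Fin n)) +
        Δt • (fderiv ℝ (G i) (x i.succ)).comp (fderiv ℝ (N i) (x i.castSucc)) :=
    hNf.unique (hgg.congr_of_eventuallyEq heq)
  have hid : ∀ z, (e i) (fderiv ℝ (N i) (x i.castSucc) z) = z := by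
    intro z
    have hz : fderiv ℝ (N i) (x i.castSucc) z =
        z + Δt • (fderiv ℝ (G i) (x i.succ)) (fderiv ℝ (N i) (x i.castSucc) z) := by
      conv_lhs => rw [hDeq]
      simp
    have : (e i) (fderiv ℝ (N i) (x i.castSucc) z) =
        fderiv ℝ (N i) (x i.castSucc) z -
          Δt • (fderiv ℝ (G i) (x i.succ)) (fderiv ℝ (N i) (x i.castSucc) z) := by
      have := congrArg (fun (L : EuclideanSpace ℝ (Fin n) →L[ℝ] EuclideanSpace ℝ (Fin n)) =>
        L (fderiv ℝ (N i) (x i.castSucc) z)) (he i)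
      simpa using this
    rw [this]
    nth_rewrite 1 [hz]
    abel
  have hDsymm : fderiv ℝ (N i) (x i.castSucc) =
      ((e i).symm : EuclideanSpace ℝ (Fin n) →L[ℝ] EuclideanSpace ℝ (Fin n)) := by
    ext1 z
    have h2 := congrArg (e i).symm (hid z)
    rw [(e i).symm_apply_apply] at h2
    exact h2
  rw [← hDsymm]; exact hNf


/-- Theorem (vector form): under the hypotheses of Lemma 2, for every vector
`v`, the vector `w = A_1 (A_2 (⋯ (A_m v)⋯))` obtained by `m` successive
matrix-vector products with the residual Jacobians
`A_i = id - Δt • (fderiv G_i x_i)` (0-indexed: the right fold over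
`List.finRange m`, applying `A (m-1)` to `v` first and `A 0` last) satisfies
`(fderiv (N_m ∘ ⋯ ∘ N_1) x₀) w = v`; that is, `w` is the differential inverse
`(E')⁻¹ · v` of the implicit Euler method applied to `v`. -/
theorem implicit_euler_differential_inverse_vec (n m : ℕ) (hn : 0 < n) (hm : 0 < m)
    (Δt : ℝ)
    (G N : Fin m → (EuclideanSpace ℝ (Fin n) → EuclideanSpace ℝ (Fin n)))
    (x : Fin (m + 1) → EuclideanSpace ℝ (Fin n))
    (e : Fin m → (EuclideanSpace ℝ (Fin n) ≃L[ℝ] EuclideanSpace ℝ (Fin n)))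
    (hstep : ∀ i : Fin m, N i (x i.castSucc) = x i.succ)
    (hG : ∀ i : Fin m, DifferentiableAt ℝ (G i) (x i.succ))
    (hN : ∀ i : Fin m, DifferentiableAt ℝ (N i) (x i.castSucc))
    (hres : ∀ i : Fin m, ∀ᶠ y in nhds (x i.castSucc),
      N i y - y - Δt • G i (N i y) = 0)
    (he : ∀ i : Fin m,
      (e i : EuclideanSpace ℝ (Fin n) →L[ℝ] EuclideanSpace ℝ (Fin n)) =
        ContinuousLinearMap.id ℝ (EuclideanSpace ℝ (Fin n)) -
          Δt • fderiv ℝ (G i) (x i.succ)) :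
    ∀ v : EuclideanSpace ℝ (Fin n),
      fderiv ℝ (fun y => (List.ofFn N).foldl (fun z f => f z) y) (x 0)
        ((List.finRange m).foldr
          (fun i w =>
            (ContinuousLinearMap.id ℝ (EuclideanSpace ℝ (Fin n)) -
              Δt • fderiv ℝ (G i) (x i.succ)) w)
          v) = v := by
  intro v
  have hDN : ∀ i : Fin m, HasFDerivAt (N i)
      ((e i).symm : EuclideanSpace ℝ (Fin n) →L[ℝ] EuclideanSpace ℝ (Fin n))
      (x i.castSucc) := step_deriv n m Δt G N x e hstep hG hN hres he
  have key : ∀ k, ∀ hk : k ≤ m,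
      ∃ L : EuclideanSpace ℝ (Fin n) →L[ℝ] EuclideanSpace ℝ (Fin n),
      HasFDerivAt (fun y => ((List.ofFn N).take k).foldl (fun z f => f z) y) L (x 0) ∧
      ((List.ofFn N).take k).foldl (fun z f => f z) (x 0) = x ⟨k, Nat.lt_succ_of_le hk⟩ ∧
      ∀ u, L (((List.finRange m).take k).foldr
        (fun i w => (e i : EuclideanSpace ℝ (Fin n) →L[ℝ] EuclideanSpace ℝ (Fin n)) w) u)
        = u := by
    intro k
    induction k with
    | zero =>
      intro hk
      refine ⟨ContinuousLinearMap.id ℝ _, ?_, ?_, ?_⟩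
      · simp only [List.take_zero, List.foldl_nil]; exact hasFDerivAt_id (x 0)
      · simp only [List.take_zero, List.foldl_nil]
        congr 1
      · intro u; simp
    | succ k ih =>
      intro hk
      have hk' : k < m := hk
      obtain ⟨L, hL, hLx, hLu⟩ := ih (le_of_lt hk')
      have htake : (List.ofFn N).take (k+1) = (List.ofFn N).take k ++ [N ⟨k, hk'⟩] := by
        rw [List.take_succ]
        simp [List.getElem?_eq_getElem (by simpa using hk' : k < (List.ofFn N).length)]
      have hfr : (List.finRange m).take (k+1) = (List.finRange m).take k ++ [⟨k, hk'⟩] := by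
        rw [List.take_succ]
        simp [List.getElem?_eq_getElem (by simpa using hk' : k < (List.finRange m).length)]
      refine ⟨((e ⟨k, hk'⟩).symm :
          EuclideanSpace ℝ (Fin n) →L[ℝ] EuclideanSpace ℝ (Fin n)).comp L, ?_, ?_, ?_⟩
      · have hfun : (fun y => ((List.ofFn N).take (k+1)).foldl (fun z f => f z) y)
            = fun y => N ⟨k, hk'⟩ (((List.ofFn N).take k).foldl (fun z f => f z) y) := by
          funext y
          rw [htake, List.foldl_append]
          rfl
        rw [hfun]
        have hpt : ((List.ofFn N).take k).foldl (fun z f => f z) (x 0)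
            = x (Fin.castSucc ⟨k, hk'⟩) := by
          rw [hLx]; congr 1
        exact (hpt ▸ hDN ⟨k, hk'⟩ : HasFDerivAt (N ⟨k, hk'⟩) _
          (((List.ofFn N).take k).foldl (fun z f => f z) (x 0))).comp (x 0) hL
      · rw [htake, List.foldl_append]
        simp only [List.foldl_cons, List.foldl_nil]
        rw [hLx]
        have : x (Fin.succ ⟨k, hk'⟩) = x ⟨k + 1, Nat.lt_succ_of_le hk⟩ := by congr 1
        rw [← this, ← hstep ⟨k, hk'⟩]
        congr 1
      · intro u
        rw [hfr, List.foldr_append]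
        simp only [List.foldr_cons, List.foldr_nil, ContinuousLinearMap.comp_apply]
        rw [hLu]
        simp
  obtain ⟨L, hL, -, hLu⟩ := key m le_rfl
  have h1 : (List.ofFn N).take m = List.ofFn N := by simp
  have h2 : (List.finRange m).take m = List.finRange m := by simp
  rw [h1] at hL
  rw [h2] at hLu
  rw [hL.fderiv]
  simp only [← he]
  exact hLu v
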